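/- Let (X,T) be an NDS, Z ⊂ X_0, f a potential and c > 0. For each pressure P ∈ {P^B, P^P, P_low, P_up, Q_low, Q_up}: if c ≥ 1 then P(T,cf,Z) ≤ c·P(T,f,Z), and if c ≤ 1 then P(T,cf,Z) ≥ c·P(T,f,Z), where cf denotes the potential {c·f_k}_{k=0}^∞. -/

import Mathlib

open Filter Set
open scoped ENNReal NNReal

noncomputable section

namespace NDS

variable {X : ℕ → Type*}

/-- The orbit maps `T_k^j : X k → X (k+j)` of a nonautonomous system. -/
def iterFrom (T : ∀ k, X k → X (k + 1)) (k : ℕ) : ∀ j, X k → X (k + j)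
  | 0 => fun x => x
  | j + 1 => fun x => T (k + j) (iterFrom T k j x)

/-- The orbit maps `T^j = T_{j-1} ∘ ⋯ ∘ T_0 : X 0 → X j`. -/
def iter (T : ∀ k, X k → X (k + 1)) : ∀ j, X 0 → X j
  | 0 => fun x => x
  | j + 1 => fun x => T j (iter T j x)

variable [∀ k, MetricSpace (X k)]

/-- The `n`-th Bowen metric on `X 0`:  `d_n^T(x,y) = max_{0 ≤ j ≤ n-1} d_j (T^j x) (T^j y)`. -/
def bowenDist (T : ∀ k, X k → X (k + 1)) (n : ℕ) (x y : X 0) : ℝ :=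
  (((Finset.range n).sup fun j => nndist (iter T j x) (iter T j y) : ℝ≥0) : ℝ)

/-- The open Bowen ball `B_n^T(x, ε)`. -/
def bowenBall (T : ∀ k, X k → X (k + 1)) (n : ℕ) (x : X 0) (ε : ℝ) : Set (X 0) :=
  {y | bowenDist T n x y < ε}

/-- The closed Bowen ball `clB_n^T(x, ε)`. -/
def bowenClosedBall (T : ∀ k, X k → X (k + 1)) (n : ℕ) (x : X 0) (ε : ℝ) : Set (X 0) :=
  {y | bowenDist T n x y ≤ ε}

/-- Birkhoff sums starting at level `k`:  `S_{k,n}^T f = Σ_{j<n} f_{k+j} ∘ T_k^j`. -/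
def birkFrom (T : ∀ k, X k → X (k + 1)) (f : ∀ k, X k → ℝ) (k n : ℕ) (x : X k) : ℝ :=
  ∑ j ∈ Finset.range n, f (k + j) (iterFrom T k j x)

/-- Birkhoff sums `S_n^T f = Σ_{j<n} f_j ∘ T^j` on `X 0`. -/
def birk (T : ∀ k, X k → X (k + 1)) (f : ∀ k, X k → ℝ) (n : ℕ) (x : X 0) : ℝ :=
  ∑ j ∈ Finset.range n, f j (iter T j x)

/-- A potential `f = {f_k}` is equicontinuous. -/
def EquicontPotential (f : ∀ k, X k → ℝ) : Prop :=
  ∀ ε : ℝ, 0 < ε → ∃ δ : ℝ, 0 < δ ∧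
    ∀ k, ∀ x y : X k, dist x y < δ → |f k x - f k y| < ε

/-- The sequence of maps `T = {T_k}` is equicontinuous. -/
def EquicontMaps (T : ∀ k, X k → X (k + 1)) : Prop :=
  ∀ ε : ℝ, 0 < ε → ∃ δ : ℝ, 0 < δ ∧
    ∀ k, ∀ x y : X k, dist x y < δ → dist (T k x) (T k y) < ε

/-- `F` is an `(n,ε)`-spanning set for `Z`. -/
def IsSpanning (T : ∀ k, X k → X (k + 1)) (n : ℕ) (ε : ℝ) (Z : Set (X 0))
    (F : Finset (X 0)) : Prop :=
  ∀ x ∈ Z, ∃ y ∈ F, bowenDist T n x y ≤ ε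

/-- `E` is an `(n,ε)`-separated set for `Z`. -/
def IsSeparated (T : ∀ k, X k → X (k + 1)) (n : ℕ) (ε : ℝ) (Z : Set (X 0))
    (E : Finset (X 0)) : Prop :=
  ↑E ⊆ Z ∧ ∀ x ∈ E, ∀ y ∈ E, x ≠ y → ε < bowenDist T n x y

/-- The partition sum `Σ_{x ∈ F} e^{S_n^T f(x)}` (valued in `ℝ≥0∞`). -/
def partSum (T : ∀ k, X k → X (k + 1)) (f : ∀ k, X k → ℝ) (n : ℕ) (F : Finset (X 0)) : ℝ≥0∞ :=
  ∑ x ∈ F, ENNReal.ofReal (Real.exp (birk T f n x))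

/-- `Q_n(T,f,Z,ε)`, infimum over `(n,ε)`-spanning sets. -/
def Qn (T : ∀ k, X k → X (k + 1)) (f : ∀ k, X k → ℝ) (Z : Set (X 0)) (n : ℕ) (ε : ℝ) : ℝ≥0∞ :=
  ⨅ (F : Finset (X 0)) (_ : IsSpanning T n ε Z F), partSum T f n F

/-- `P_n(T,f,Z,ε)`, supremum over `(n,ε)`-separated sets. -/
def Pn (T : ∀ k, X k → X (k + 1)) (f : ∀ k, X k → ℝ) (Z : Set (X 0)) (n : ℕ) (ε : ℝ) : ℝ≥0∞ :=
  ⨆ (E : Finset (X 0)) (_ : IsSeparated T n ε Z E), partSum T f n E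

/-- `liminf_n (1/n) log u n` (in `EReal`). -/
def lowRate (u : ℕ → ℝ≥0∞) : EReal :=
  Filter.atTop.liminf fun n : ℕ => (((n : ℝ)⁻¹ : ℝ) : EReal) * ENNReal.log (u n)

/-- `limsup_n (1/n) log u n` (in `EReal`). -/
def upRate (u : ℕ → ℝ≥0∞) : EReal :=
  Filter.atTop.limsup fun n : ℕ => (((n : ℝ)⁻¹ : ℝ) : EReal) * ENNReal.log (u n)

/-- Lower spanning topological pressure `Q_low(T,f,Z)`; the limit as `ε → 0` is realised as a
supremum over `ε > 0`, the quantity being monotone in `ε`. -/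
def Qlow (T : ∀ k, X k → X (k + 1)) (f : ∀ k, X k → ℝ) (Z : Set (X 0)) : EReal :=
  ⨆ (ε : ℝ) (_ : 0 < ε), lowRate fun n => Qn T f Z n ε

/-- Upper spanning topological pressure `Q_up(T,f,Z)`. -/
def Qup (T : ∀ k, X k → X (k + 1)) (f : ∀ k, X k → ℝ) (Z : Set (X 0)) : EReal :=
  ⨆ (ε : ℝ) (_ : 0 < ε), upRate fun n => Qn T f Z n ε

/-- Lower separated topological pressure `P_low(T,f,Z)`. -/
def Plow (T : ∀ k, X k → X (k + 1)) (f : ∀ k, X k → ℝ) (Z : Set (X 0)) : EReal :=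
  ⨆ (ε : ℝ) (_ : 0 < ε), lowRate fun n => Pn T f Z n ε

/-- Upper separated topological pressure `P_up(T,f,Z)`. -/
def Pup (T : ∀ k, X k → X (k + 1)) (f : ∀ k, X k → ℝ) (Z : Set (X 0)) : EReal :=
  ⨆ (ε : ℝ) (_ : 0 < ε), upRate fun n => Pn T f Z n ε

/-- The critical value `inf {s : M s = 0}` of a "measure profile" `M`, as an extended real. -/
def crit (M : ℝ → ℝ≥0∞) : EReal :=
  sInf (Real.toEReal '' {s : ℝ | M s = 0})

/-- The critical value `sup {s : M s = ∞}` of a "measure profile" `M`, as an extended real. -/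
def critSup (M : ℝ → ℝ≥0∞) : EReal :=
  sSup (Real.toEReal '' {s : ℝ | M s = ⊤})

/-- A countable family of Bowen balls (recorded by their (center, order) data) which is an
`(N,ε)`-cover of `Z`. -/
def IsBowenCover (T : ∀ k, X k → X (k + 1)) (N : ℕ) (ε : ℝ) (Z : Set (X 0))
    (C : Set (X 0 × ℕ)) : Prop :=
  C.Countable ∧ (∀ p ∈ C, N ≤ p.2) ∧ Z ⊆ ⋃ p ∈ C, bowenBall T p.2 p.1 ε

/-- A countable disjoint family of closed Bowen balls with centers in `Z` and orders `≥ N`: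
an `(N,ε)`-packing of `Z`. -/
def IsBowenPacking (T : ∀ k, X k → X (k + 1)) (N : ℕ) (ε : ℝ) (Z : Set (X 0))
    (P : Set (X 0 × ℕ)) : Prop :=
  P.Countable ∧ (∀ p ∈ P, p.1 ∈ Z ∧ N ≤ p.2) ∧
    ∀ p ∈ P, ∀ q ∈ P, p ≠ q →
      Disjoint (bowenClosedBall T p.2 p.1 ε) (bowenClosedBall T q.2 q.1 ε)

/-- `Σ_i exp (-n_i s + S_{n_i}^T f (x_i))` over a family of (center, order) pairs. -/
def ballSum (T : ∀ k, X k → X (k + 1)) (f : ∀ k, X k → ℝ) (s : ℝ) (C : Set (X 0 × ℕ)) : ℝ≥0∞ :=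
  ∑' p : C, ENNReal.ofReal (Real.exp (-(p.1.2 : ℝ) * s + birk T f p.1.2 p.1.1))

/-- The Hausdorff-type pre-measure `M^s_{N,ε}(T,f,Z)`. -/
def bowenPreMeas (T : ∀ k, X k → X (k + 1)) (f : ∀ k, X k → ℝ) (Z : Set (X 0))
    (s : ℝ) (N : ℕ) (ε : ℝ) : ℝ≥0∞ :=
  ⨅ (C : Set (X 0 × ℕ)) (_ : IsBowenCover T N ε Z C), ballSum T f s C

/-- `M^s_ε(T,f,Z) = lim_{N → ∞} M^s_{N,ε}(T,f,Z)` (an increasing limit, i.e. a supremum). -/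
def bowenMeas (T : ∀ k, X k → X (k + 1)) (f : ∀ k, X k → ℝ) (Z : Set (X 0))
    (s : ℝ) (ε : ℝ) : ℝ≥0∞ :=
  ⨆ N : ℕ, bowenPreMeas T f Z s N ε

/-- `P^B(T,f,Z,ε)`: the critical value of `s ↦ M^s_ε(T,f,Z)`. -/
def PBe (T : ∀ k, X k → X (k + 1)) (f : ∀ k, X k → ℝ) (Z : Set (X 0)) (ε : ℝ) : EReal :=
  crit fun s => bowenMeas T f Z s ε

/-- The Bowen (Pesin–Pitskel') topological pressure `P^B(T,f,Z)`; the limit as `ε → 0` is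
realised as a supremum over `ε > 0` by monotonicity. -/
def PB (T : ∀ k, X k → X (k + 1)) (f : ∀ k, X k → ℝ) (Z : Set (X 0)) : EReal :=
  ⨆ (ε : ℝ) (_ : 0 < ε), PBe T f Z ε

/-- The packing pre-measure `𝒫^s_{N,ε}(T,f,Z)`. -/
def packPre (T : ∀ k, X k → X (k + 1)) (f : ∀ k, X k → ℝ) (Z : Set (X 0))
    (s : ℝ) (N : ℕ) (ε : ℝ) : ℝ≥0∞ :=
  ⨆ (P : Set (X 0 × ℕ)) (_ : IsBowenPacking T N ε Z P), ballSum T f s P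

/-- The packing content `𝒫^s_{∞,ε}(T,f,Z) = lim_{N→∞} 𝒫^s_{N,ε}` (a decreasing limit, i.e. an
infimum). -/
def packContent (T : ∀ k, X k → X (k + 1)) (f : ∀ k, X k → ℝ) (Z : Set (X 0))
    (s : ℝ) (ε : ℝ) : ℝ≥0∞ :=
  ⨅ N : ℕ, packPre T f Z s N ε

/-- The packing measure `𝒫^s_ε(T,f,Z)`, obtained from the content by countable decompositions. -/
def packMeas (T : ∀ k, X k → X (k + 1)) (f : ∀ k, X k → ℝ) (Z : Set (X 0))
    (s : ℝ) (ε : ℝ) : ℝ≥0∞ :=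
  ⨅ (D : ℕ → Set (X 0)) (_ : Z ⊆ ⋃ i, D i), ∑' i, packContent T f (D i) s ε

/-- `P^P(T,f,Z,ε)`: the critical value of `s ↦ 𝒫^s_ε(T,f,Z)`. -/
def PPe (T : ∀ k, X k → X (k + 1)) (f : ∀ k, X k → ℝ) (Z : Set (X 0)) (ε : ℝ) : EReal :=
  crit fun s => packMeas T f Z s ε

/-- The packing topological pressure `P^P(T,f,Z)`. -/
def PP (T : ∀ k, X k → X (k + 1)) (f : ∀ k, X k → ℝ) (Z : Set (X 0)) : EReal :=
  ⨆ (ε : ℝ) (_ : 0 < ε), PPe T f Z ε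

end NDS

/-- `P(c·f) ≤ c·P(f)` for `c ≥ 1` and `P(c·f) ≥ c·P(f)` for `c ≤ 1`. -/
def NDS.ScaleIneq (a b : EReal) (c : ℝ) : Prop :=
  (1 ≤ c → a ≤ (c : EReal) * b) ∧ (c ≤ 1 → (c : EReal) * b ≤ a)


section ScalingAux

open NDS

/-! ### ENNReal power inequalities -/

private lemma aux_tsum_rpow_le {ι : Type*} (a : ι → ℝ≥0∞) {c : ℝ} (hc : 1 ≤ c) :
    ∑' i, a i ^ c ≤ (∑' i, a i) ^ c := by
  have hc0 : (0:ℝ) < c := lt_of_lt_of_le one_pos hc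
  by_cases hS : (∑' i, a i) = ⊤
  · rw [hS, ENNReal.top_rpow_of_pos hc0]; exact le_top
  by_cases hS0 : (∑' i, a i) = 0
  · have h0 : ∀ i, a i = 0 := ENNReal.tsum_eq_zero.mp hS0
    simp [h0, ENNReal.zero_rpow_of_pos hc0]
  · have step1 : ∑' i, a i ^ c ≤ ∑' i, a i * (∑' i, a i) ^ (c-1) := by
      refine ENNReal.tsum_le_tsum fun i => ?_
      by_cases hi : a i = 0
      · simp [hi, ENNReal.zero_rpow_of_pos hc0]
      · have hit : a i ≠ ⊤ := ne_top_of_le_ne_top hS (ENNReal.le_tsum i)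
        have e1 : a i ^ c = a i ^ (1:ℝ) * a i ^ (c-1) := by
          rw [← ENNReal.rpow_add 1 (c-1) hi hit]; norm_num
        rw [e1, ENNReal.rpow_one]
        exact mul_le_mul_of_nonneg_left
          (ENNReal.rpow_le_rpow (ENNReal.le_tsum i) (by linarith)) zero_le
    have step2 : ∑' i, a i * (∑' i, a i) ^ (c-1) = (∑' i, a i) * (∑' i, a i) ^ (c-1) :=
      ENNReal.tsum_mul_right
    have step3 : (∑' i, a i) * (∑' i, a i) ^ (c-1) = (∑' i, a i) ^ c := by
      nth_rewrite 1 [← ENNReal.rpow_one (∑' i, a i)]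
      rw [← ENNReal.rpow_add 1 (c-1) hS0 hS]; norm_num
    rw [← step3, ← step2]; exact step1

private lemma aux_sum_rpow_le {α : Type*} (F : Finset α) (b : α → ℝ≥0∞) {c : ℝ} (hc : 1 ≤ c) :
    ∑ x ∈ F, b x ^ c ≤ (∑ x ∈ F, b x) ^ c := by
  have h1 : ∑ x ∈ F, b x ^ c = ∑' x : {x // x ∈ F}, b (↑x) ^ c := by
    rw [tsum_fintype]; exact (Finset.sum_coe_sort F (fun x => b x ^ c)).symm
  have h2 : ∑ x ∈ F, b x = ∑' x : {x // x ∈ F}, b (↑x) := by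
    rw [tsum_fintype]; exact (Finset.sum_coe_sort F b).symm
  rw [h1, h2]; exact aux_tsum_rpow_le _ hc

private lemma aux_rpow_iInf {ι : Sort*} {u : ι → ℝ≥0∞} {c : ℝ} (hc0 : 0 < c) :
    (⨅ i, u i) ^ c = ⨅ i, (u i) ^ c := by
  have h := OrderIso.map_iInf (ENNReal.orderIsoRpow c hc0) u
  simp only [ENNReal.orderIsoRpow_apply] at h
  exact h

private lemma aux_rpow_iSup {ι : Sort*} {u : ι → ℝ≥0∞} {c : ℝ} (hc0 : 0 < c) :
    (⨆ i, u i) ^ c = ⨆ i, (u i) ^ c := by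
  have h := OrderIso.map_iSup (ENNReal.orderIsoRpow c hc0) u
  simp only [ENNReal.orderIsoRpow_apply] at h
  exact h

private lemma aux_ofReal_exp_smul (c t : ℝ) :
    ENNReal.ofReal (Real.exp (c * t)) = ENNReal.ofReal (Real.exp t) ^ c := by
  rw [mul_comm, Real.exp_mul, ENNReal.ofReal_rpow_of_pos (Real.exp_pos t)]

/-! ### EReal multiplication order isomorphism and crit -/

private def aux_mulIso (c : ℝ) (hc : 0 < c) : EReal ≃o EReal where
  toFun x := (c : EReal) * x
  invFun x := ((c⁻¹ : ℝ) : EReal) * x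
  left_inv x := by
    show ((c⁻¹ : ℝ) : EReal) * ((c : EReal) * x) = x
    rw [← mul_assoc, ← EReal.coe_mul, inv_mul_cancel₀ hc.ne', EReal.coe_one, one_mul]
  right_inv x := by
    show (c : EReal) * (((c⁻¹ : ℝ) : EReal) * x) = x
    rw [← mul_assoc, ← EReal.coe_mul, mul_inv_cancel₀ hc.ne', EReal.coe_one, one_mul]
  map_rel_iff' := by
    intro x y
    show (c : EReal) * x ≤ (c : EReal) * y ↔ x ≤ y
    constructor
    · intro h
      have h2 := mul_le_mul_of_nonneg_left h
        (show (0:EReal) ≤ ((c⁻¹:ℝ):EReal) by exact_mod_cast (inv_pos.mpr hc).le)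
      rwa [← mul_assoc, ← mul_assoc, ← EReal.coe_mul, inv_mul_cancel₀ hc.ne',
        EReal.coe_one, one_mul, one_mul] at h2
    · intro h
      exact mul_le_mul_of_nonneg_left h (show (0:EReal) ≤ (c:EReal) by exact_mod_cast hc.le)

private lemma aux_mulIso_apply (c : ℝ) (hc : 0 < c) (x : EReal) :
    aux_mulIso c hc x = (c : EReal) * x := by rfl

private lemma aux_crit_le_smul (M1 M2 : ℝ → ℝ≥0∞) {c : ℝ} (hc : 0 < c)
    (h : ∀ s : ℝ, M1 s = 0 → M2 (c * s) = 0) :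
    NDS.crit M2 ≤ (c : EReal) * NDS.crit M1 := by
  have hrw : (c : EReal) * NDS.crit M1
      = ⨅ a ∈ Real.toEReal '' {s | M1 s = 0}, (aux_mulIso c hc) a := by
    rw [NDS.crit, ← aux_mulIso_apply c hc, OrderIso.map_sInf]
  rw [hrw]
  refine le_iInf₂ fun a ha => ?_
  obtain ⟨s, hs, rfl⟩ := ha
  have he : (aux_mulIso c hc) (Real.toEReal s) = Real.toEReal (c * s) := by
    rw [aux_mulIso_apply, ← EReal.coe_mul]
  rw [he]
  exact sInf_le ⟨c * s, h s hs, rfl⟩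

/-! ### Scaling of the basic sums -/

variable {X : ℕ → Type*} [∀ k, MetricSpace (X k)]

private lemma aux_birk_smul (T : ∀ k, X k → X (k + 1)) (f : ∀ k, X k → ℝ) (c : ℝ)
    (n : ℕ) (x : X 0) :
    birk T (fun k x => c * f k x) n x = c * birk T f n x := by
  simp [NDS.birk, Finset.mul_sum]

private lemma aux_partSum_smul_le (T : ∀ k, X k → X (k + 1)) (f : ∀ k, X k → ℝ) {c : ℝ}
    (hc : 1 ≤ c) (n : ℕ) (F : Finset (X 0)) :
    partSum T (fun k x => c * f k x) n F ≤ (partSum T f n F) ^ c := by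
  unfold NDS.partSum
  calc ∑ x ∈ F, ENNReal.ofReal (Real.exp (birk T (fun k x => c * f k x) n x))
      = ∑ x ∈ F, ENNReal.ofReal (Real.exp (birk T f n x)) ^ c := by
        refine Finset.sum_congr rfl fun x _ => ?_
        rw [aux_birk_smul, aux_ofReal_exp_smul]
    _ ≤ _ := aux_sum_rpow_le F _ hc

private lemma aux_ballSum_smul_le (T : ∀ k, X k → X (k + 1)) (f : ∀ k, X k → ℝ) {c : ℝ}
    (hc : 1 ≤ c) (s : ℝ) (C : Set (X 0 × ℕ)) :
    ballSum T (fun k x => c * f k x) (c * s) C ≤ (ballSum T f s C) ^ c := by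
  unfold NDS.ballSum
  calc (∑' p : C, ENNReal.ofReal
          (Real.exp (-(p.1.2 : ℝ) * (c * s) + birk T (fun k x => c * f k x) p.1.2 p.1.1)))
      = ∑' p : C, ENNReal.ofReal
          (Real.exp (-(p.1.2 : ℝ) * s + birk T f p.1.2 p.1.1)) ^ c := by
        refine tsum_congr fun p => ?_
        rw [aux_birk_smul, show -(p.1.2 : ℝ) * (c * s) + c * birk T f p.1.2 p.1.1
            = c * (-(p.1.2 : ℝ) * s + birk T f p.1.2 p.1.1) by ring, aux_ofReal_exp_smul]
    _ ≤ _ := aux_tsum_rpow_le _ hc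

/-! ### Scaling of the six pressures for `c ≥ 1` -/

private lemma aux_Pn_smul_le (T : ∀ k, X k → X (k + 1)) (f : ∀ k, X k → ℝ) {c : ℝ}
    (hc : 1 ≤ c) (Z : Set (X 0)) (n : ℕ) (ε : ℝ) :
    Pn T (fun k x => c * f k x) Z n ε ≤ (Pn T f Z n ε) ^ c := by
  have hc0 : (0:ℝ) < c := lt_of_lt_of_le one_pos hc
  refine iSup₂_le fun E hE => ?_
  calc partSum T (fun k x => c * f k x) n E ≤ (partSum T f n E) ^ c :=
        aux_partSum_smul_le T f hc n E
    _ ≤ (Pn T f Z n ε) ^ c :=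
        ENNReal.rpow_le_rpow (le_iSup₂ (f := fun E (_ : IsSeparated T n ε Z E) =>
          partSum T f n E) E hE) hc0.le

private lemma aux_Qn_smul_le (T : ∀ k, X k → X (k + 1)) (f : ∀ k, X k → ℝ) {c : ℝ}
    (hc : 1 ≤ c) (Z : Set (X 0)) (n : ℕ) (ε : ℝ) :
    Qn T (fun k x => c * f k x) Z n ε ≤ (Qn T f Z n ε) ^ c := by
  have hc0 : (0:ℝ) < c := lt_of_lt_of_le one_pos hc
  unfold NDS.Qn
  rw [aux_rpow_iInf hc0]
  refine iInf_mono fun F => ?_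
  rw [aux_rpow_iInf hc0]
  exact iInf_mono fun _ => aux_partSum_smul_le T f hc n F

private lemma aux_bowenMeas_smul_le (T : ∀ k, X k → X (k + 1)) (f : ∀ k, X k → ℝ) {c : ℝ}
    (hc : 1 ≤ c) (Z : Set (X 0)) (s ε : ℝ) :
    bowenMeas T (fun k x => c * f k x) Z (c * s) ε ≤ (bowenMeas T f Z s ε) ^ c := by
  have hc0 : (0:ℝ) < c := lt_of_lt_of_le one_pos hc
  unfold NDS.bowenMeas NDS.bowenPreMeas
  rw [aux_rpow_iSup hc0]
  refine iSup_mono fun N => ?_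
  rw [aux_rpow_iInf hc0]
  refine iInf_mono fun C => ?_
  rw [aux_rpow_iInf hc0]
  exact iInf_mono fun _ => aux_ballSum_smul_le T f hc s C

private lemma aux_packMeas_smul_le (T : ∀ k, X k → X (k + 1)) (f : ∀ k, X k → ℝ) {c : ℝ}
    (hc : 1 ≤ c) (Z : Set (X 0)) (s ε : ℝ) :
    packMeas T (fun k x => c * f k x) Z (c * s) ε ≤ (packMeas T f Z s ε) ^ c := by
  have hc0 : (0:ℝ) < c := lt_of_lt_of_le one_pos hc
  have hcontent : ∀ (W : Set (X 0)),
      packContent T (fun k x => c * f k x) W (c * s) ε ≤ (packContent T f W s ε) ^ c := by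
    intro W
    unfold NDS.packContent NDS.packPre
    rw [aux_rpow_iInf hc0]
    refine iInf_mono fun N => ?_
    refine iSup₂_le fun P hP => ?_
    calc ballSum T (fun k x => c * f k x) (c * s) P ≤ (ballSum T f s P) ^ c :=
          aux_ballSum_smul_le T f hc s P
      _ ≤ _ := ENNReal.rpow_le_rpow (le_iSup₂ (f := fun P (_ : IsBowenPacking T N ε W P) =>
            ballSum T f s P) P hP) hc0.le
  unfold NDS.packMeas
  rw [aux_rpow_iInf hc0]
  refine iInf_mono fun D => ?_
  rw [aux_rpow_iInf hc0]
  refine iInf_mono fun _ => ?_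
  calc ∑' i, packContent T (fun k x => c * f k x) (D i) (c * s) ε
      ≤ ∑' i, (packContent T f (D i) s ε) ^ c := ENNReal.tsum_le_tsum fun i => hcontent (D i)
    _ ≤ _ := aux_tsum_rpow_le _ hc

private lemma aux_rate_step {c : ℝ} (hc0 : 0 < c) {u v : ℕ → ℝ≥0∞}
    (h : ∀ n, v n ≤ (u n) ^ c) (n : ℕ) :
    (((n : ℝ)⁻¹ : ℝ) : EReal) * ENNReal.log (v n)
      ≤ (aux_mulIso c hc0) ((((n : ℝ)⁻¹ : ℝ) : EReal) * ENNReal.log (u n)) := by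
  have h1 : ENNReal.log (v n) ≤ (c : EReal) * ENNReal.log (u n) := by
    calc ENNReal.log (v n) ≤ ENNReal.log ((u n) ^ c) := ENNReal.log_monotone (h n)
      _ = (c : EReal) * ENNReal.log (u n) := ENNReal.log_rpow
  have h2 := mul_le_mul_of_nonneg_left h1
    (show (0:EReal) ≤ (((n : ℝ)⁻¹ : ℝ) : EReal) by
      exact_mod_cast inv_nonneg.mpr (Nat.cast_nonneg n))
  rw [aux_mulIso_apply]
  calc (((n : ℝ)⁻¹ : ℝ) : EReal) * ENNReal.log (v n)
      ≤ (((n : ℝ)⁻¹ : ℝ) : EReal) * ((c : EReal) * ENNReal.log (u n)) := h2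
    _ = (c : EReal) * ((((n : ℝ)⁻¹ : ℝ) : EReal) * ENNReal.log (u n)) := by
        rw [← mul_assoc, ← mul_assoc, mul_comm (((((n : ℝ)⁻¹ : ℝ)) : EReal)) ((c : EReal))]

private lemma aux_lowRate_smul_le {c : ℝ} (hc0 : 0 < c) {u v : ℕ → ℝ≥0∞}
    (h : ∀ n, v n ≤ (u n) ^ c) :
    lowRate v ≤ (c : EReal) * lowRate u := by
  calc lowRate v
      ≤ Filter.atTop.liminf (fun n : ℕ =>
          (aux_mulIso c hc0) ((((n : ℝ)⁻¹ : ℝ) : EReal) * ENNReal.log (u n))) :=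
        Filter.liminf_le_liminf (Filter.Eventually.of_forall (aux_rate_step hc0 h))
    _ = (aux_mulIso c hc0) (lowRate u) := ((aux_mulIso c hc0).liminf_apply).symm
    _ = (c : EReal) * lowRate u := aux_mulIso_apply c hc0 _

private lemma aux_upRate_smul_le {c : ℝ} (hc0 : 0 < c) {u v : ℕ → ℝ≥0∞}
    (h : ∀ n, v n ≤ (u n) ^ c) :
    upRate v ≤ (c : EReal) * upRate u := by
  calc upRate v
      ≤ Filter.atTop.limsup (fun n : ℕ =>
          (aux_mulIso c hc0) ((((n : ℝ)⁻¹ : ℝ) : EReal) * ENNReal.log (u n))) :=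
        Filter.limsup_le_limsup (Filter.Eventually.of_forall (aux_rate_step hc0 h))
    _ = (aux_mulIso c hc0) (upRate u) := ((aux_mulIso c hc0).limsup_apply).symm
    _ = (c : EReal) * upRate u := aux_mulIso_apply c hc0 _

private lemma aux_coe_nonneg {c : ℝ} (hc0 : 0 < c) : (0:EReal) ≤ (c : EReal) := by
  exact_mod_cast hc0.le

private lemma aux_PB_smul_le (T : ∀ k, X k → X (k + 1)) (Z : Set (X 0)) {c : ℝ}
    (hc : 1 ≤ c) (f : ∀ k, X k → ℝ) :
    PB T (fun k x => c * f k x) Z ≤ (c : EReal) * PB T f Z := by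
  have hc0 : (0:ℝ) < c := lt_of_lt_of_le one_pos hc
  refine iSup₂_le fun ε hε => ?_
  have h1 : PBe T (fun k x => c * f k x) Z ε ≤ (c : EReal) * PBe T f Z ε := by
    refine aux_crit_le_smul _ _ hc0 fun s hs => ?_
    have h2 := aux_bowenMeas_smul_le T f hc Z s ε
    rw [hs, ENNReal.zero_rpow_of_pos hc0] at h2
    exact le_antisymm h2 zero_le
  refine h1.trans (mul_le_mul_of_nonneg_left ?_ (aux_coe_nonneg hc0))
  exact le_iSup₂ (f := fun (ε : ℝ) (_ : 0 < ε) => PBe T f Z ε) ε hε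

private lemma aux_PP_smul_le (T : ∀ k, X k → X (k + 1)) (Z : Set (X 0)) {c : ℝ}
    (hc : 1 ≤ c) (f : ∀ k, X k → ℝ) :
    PP T (fun k x => c * f k x) Z ≤ (c : EReal) * PP T f Z := by
  have hc0 : (0:ℝ) < c := lt_of_lt_of_le one_pos hc
  refine iSup₂_le fun ε hε => ?_
  have h1 : PPe T (fun k x => c * f k x) Z ε ≤ (c : EReal) * PPe T f Z ε := by
    refine aux_crit_le_smul _ _ hc0 fun s hs => ?_
    have h2 := aux_packMeas_smul_le T f hc Z s ε
    rw [hs, ENNReal.zero_rpow_of_pos hc0] at h2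
    exact le_antisymm h2 zero_le
  refine h1.trans (mul_le_mul_of_nonneg_left ?_ (aux_coe_nonneg hc0))
  exact le_iSup₂ (f := fun (ε : ℝ) (_ : 0 < ε) => PPe T f Z ε) ε hε

private lemma aux_Plow_smul_le (T : ∀ k, X k → X (k + 1)) (Z : Set (X 0)) {c : ℝ}
    (hc : 1 ≤ c) (f : ∀ k, X k → ℝ) :
    Plow T (fun k x => c * f k x) Z ≤ (c : EReal) * Plow T f Z := by
  have hc0 : (0:ℝ) < c := lt_of_lt_of_le one_pos hc
  refine iSup₂_le fun ε hε => ?_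
  refine (aux_lowRate_smul_le hc0 fun n => aux_Pn_smul_le T f hc Z n ε).trans
    (mul_le_mul_of_nonneg_left ?_ (aux_coe_nonneg hc0))
  exact le_iSup₂ (f := fun (ε : ℝ) (_ : 0 < ε) => lowRate fun n => Pn T f Z n ε) ε hε

private lemma aux_Pup_smul_le (T : ∀ k, X k → X (k + 1)) (Z : Set (X 0)) {c : ℝ}
    (hc : 1 ≤ c) (f : ∀ k, X k → ℝ) :
    Pup T (fun k x => c * f k x) Z ≤ (c : EReal) * Pup T f Z := by
  have hc0 : (0:ℝ) < c := lt_of_lt_of_le one_pos hc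
  refine iSup₂_le fun ε hε => ?_
  refine (aux_upRate_smul_le hc0 fun n => aux_Pn_smul_le T f hc Z n ε).trans
    (mul_le_mul_of_nonneg_left ?_ (aux_coe_nonneg hc0))
  exact le_iSup₂ (f := fun (ε : ℝ) (_ : 0 < ε) => upRate fun n => Pn T f Z n ε) ε hε

private lemma aux_Qlow_smul_le (T : ∀ k, X k → X (k + 1)) (Z : Set (X 0)) {c : ℝ}
    (hc : 1 ≤ c) (f : ∀ k, X k → ℝ) :
    Qlow T (fun k x => c * f k x) Z ≤ (c : EReal) * Qlow T f Z := by
  have hc0 : (0:ℝ) < c := lt_of_lt_of_le one_pos hc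
  refine iSup₂_le fun ε hε => ?_
  refine (aux_lowRate_smul_le hc0 fun n => aux_Qn_smul_le T f hc Z n ε).trans
    (mul_le_mul_of_nonneg_left ?_ (aux_coe_nonneg hc0))
  exact le_iSup₂ (f := fun (ε : ℝ) (_ : 0 < ε) => lowRate fun n => Qn T f Z n ε) ε hε

private lemma aux_Qup_smul_le (T : ∀ k, X k → X (k + 1)) (Z : Set (X 0)) {c : ℝ}
    (hc : 1 ≤ c) (f : ∀ k, X k → ℝ) :
    Qup T (fun k x => c * f k x) Z ≤ (c : EReal) * Qup T f Z := by
  have hc0 : (0:ℝ) < c := lt_of_lt_of_le one_pos hc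
  refine iSup₂_le fun ε hε => ?_
  refine (aux_upRate_smul_le hc0 fun n => aux_Qn_smul_le T f hc Z n ε).trans
    (mul_le_mul_of_nonneg_left ?_ (aux_coe_nonneg hc0))
  exact le_iSup₂ (f := fun (ε : ℝ) (_ : 0 < ε) => upRate fun n => Qn T f Z n ε) ε hε

/-- Combinator: the two-sided scaling inequality follows from the `c ≥ 1` bound applied to
`c` and to `c⁻¹` with the rescaled potential. -/
private lemma aux_scaleIneq_of {X : ℕ → Type*} (P : (∀ k, X k → ℝ) → EReal)
    (hP : ∀ (c : ℝ), 1 ≤ c → ∀ g : ∀ k, X k → ℝ, P (fun k x => c * g k x) ≤ (c : EReal) * P g)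
    (f : ∀ k, X k → ℝ) {c : ℝ} (hc : 0 < c) :
    NDS.ScaleIneq (P (fun k x => c * f k x)) (P f) c := by
  constructor
  · intro h1
    exact hP c h1 f
  · intro h1
    have hcinv : 1 ≤ c⁻¹ := (one_le_inv₀ hc).mpr h1
    have h2 := hP c⁻¹ hcinv (fun k x => c * f k x)
    have heq : (fun k x => c⁻¹ * (c * f k x)) = f := by
      funext k x; rw [inv_mul_cancel_left₀ hc.ne']
    rw [heq] at h2
    have h3 := mul_le_mul_of_nonneg_left h2
      (show (0:EReal) ≤ (c : EReal) by exact_mod_cast hc.le)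
    rwa [← mul_assoc, ← EReal.coe_mul, mul_inv_cancel₀ hc.ne', EReal.coe_one, one_mul] at h3

end ScalingAux

/-- For every `c > 0` and each of the six pressures `P`, one has
`P(T, c·f, Z) ≤ c·P(T,f,Z)` when `c ≥ 1` and `P(T, c·f, Z) ≥ c·P(T,f,Z)` when `c ≤ 1`. -/
theorem pressure_scaling {X : ℕ → Type*} [∀ k, MetricSpace (X k)]
    [∀ k, CompactSpace (X k)] (T : ∀ k, X k → X (k + 1)) (hT : ∀ k, Continuous (T k))
    (f : ∀ k, X k → ℝ) (hf : ∀ k, Continuous (f k)) (Z : Set (X 0)) (c : ℝ) (hc : 0 < c) :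
    NDS.ScaleIneq (NDS.PB T (fun k x => c * f k x) Z) (NDS.PB T f Z) c ∧
    NDS.ScaleIneq (NDS.PP T (fun k x => c * f k x) Z) (NDS.PP T f Z) c ∧
    NDS.ScaleIneq (NDS.Plow T (fun k x => c * f k x) Z) (NDS.Plow T f Z) c ∧
    NDS.ScaleIneq (NDS.Pup T (fun k x => c * f k x) Z) (NDS.Pup T f Z) c ∧
    NDS.ScaleIneq (NDS.Qlow T (fun k x => c * f k x) Z) (NDS.Qlow T f Z) c ∧
    NDS.ScaleIneq (NDS.Qup T (fun k x => c * f k x) Z) (NDS.Qup T f Z) c := by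
  refine ⟨?_, ?_, ?_, ?_, ?_, ?_⟩
  · exact aux_scaleIneq_of (fun g => NDS.PB T g Z) (fun c hc g => aux_PB_smul_le T Z hc g) f hc
  · exact aux_scaleIneq_of (fun g => NDS.PP T g Z) (fun c hc g => aux_PP_smul_le T Z hc g) f hc
  · exact aux_scaleIneq_of (fun g => NDS.Plow T g Z) (fun c hc g => aux_Plow_smul_le T Z hc g) f hc
  · exact aux_scaleIneq_of (fun g => NDS.Pup T g Z) (fun c hc g => aux_Pup_smul_le T Z hc g) f hc
  · exact aux_scaleIneq_of (fun g => NDS.Qlow T g Z) (fun c hc g => aux_Qlow_smul_le T Z hc g) f hc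
  · exact aux_scaleIneq_of (fun g => NDS.Qup T g Z) (fun c hc g => aux_Qup_smul_le T Z hc g) f hc
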